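/- arXiv:2502.03609 — 5 statements merged into one kernel-verified Lean document; each statement's English description precedes it below -/
import Mathlib

section
/- If Z_1, ..., Z_n, Z are exchangeable real-valued random variables with almost surely distinct values, and F_n(z) = (1/n)·#{i ≤ n : Z_i ≤ z} is the empirical CDF of Z_1,...,Z_n, then F_n(Z) is uniformly distributed on the set {0, 1/n, 2/n, ..., 1}. -/
open MeasureTheory Finset
open scoped ENNReal

section Aux

open Classical in
/-- rank of index `j`: number of indices with strictly smaller value -/
noncomputable def rnk {n : ℕ} (v : Fin (n + 1) → ℝ) (j : Fin (n + 1)) : ℕ :=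
  (univ.filter (fun i => v i < v j)).card

lemma rnk_le {n : ℕ} (v : Fin (n + 1) → ℝ) (j : Fin (n + 1)) : rnk v j ≤ n := by
  classical
  have hsub : univ.filter (fun i => v i < v j) ⊆ univ.erase j := by
    intro i hi
    simp only [mem_filter, mem_univ, true_and] at hi
    exact mem_erase.mpr ⟨fun h => absurd hi (by simp [h]), mem_univ i⟩
  calc rnk v j ≤ (univ.erase j).card := card_le_card hsub
    _ = n := by simp [card_erase_of_mem]

lemma rnk_inj {n : ℕ} {v : Fin (n + 1) → ℝ} (hv : Function.Injective v) :
    Function.Injective (rnk v) := by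
  classical
  intro j j' h
  by_contra hne
  wlog hlt : v j < v j' generalizing j j'
  · exact this h.symm (Ne.symm hne) ((hv.ne hne).lt_or_gt.resolve_left hlt)
  have hss : univ.filter (fun i => v i < v j) ⊂ univ.filter (fun i => v i < v j') := by
    rw [Finset.ssubset_iff_of_subset]
    · exact ⟨j, by simp [hlt], by simp⟩
    · intro i hi
      simp only [mem_filter, mem_univ, true_and] at hi ⊢
      exact hi.trans hlt
  exact absurd h (Nat.ne_of_lt (card_lt_card hss))

lemma rnk_surj {n : ℕ} {v : Fin (n + 1) → ℝ} (hv : Function.Injective v)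
    (k : ℕ) (hk : k ≤ n) : ∃ j, rnk v j = k := by
  let r : Fin (n + 1) → Fin (n + 1) := fun j => ⟨rnk v j, Nat.lt_succ_of_le (rnk_le v j)⟩
  have hr : Function.Injective r := fun a b h => rnk_inj hv (by simpa [r, Fin.ext_iff] using h)
  obtain ⟨j, hj⟩ := Finite.injective_iff_surjective.mp hr ⟨k, Nat.lt_succ_of_le hk⟩
  exact ⟨j, by simpa [r, Fin.ext_iff] using hj⟩

lemma measurable_card_filter {Ω : Type*} [MeasurableSpace Ω] {ι : Type*} [Fintype ι]
    (p : ι → Ω → Prop) [∀ i ω, Decidable (p i ω)]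
    (hp : ∀ i, MeasurableSet {ω | p i ω}) :
    Measurable (fun ω => ((univ.filter (fun i => p i ω)).card : ℕ)) := by
  have h : (fun ω => (univ.filter (fun i => p i ω)).card) =
      fun ω => ∑ i : ι, if p i ω then 1 else 0 := by
    funext ω; rw [Finset.card_filter]
  rw [h]
  exact Finset.measurable_sum _ fun i _ =>
    Measurable.ite (hp i) measurable_const measurable_const

lemma card_filter_comp_perm {ι : Type*} [Fintype ι] [DecidableEq ι] (σ : Equiv.Perm ι)
    (p : ι → Prop) [DecidablePred p] :
    (univ.filter (fun i => p (σ i))).card = (univ.filter p).card := by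
  apply Finset.card_bij (fun i _ => σ i)
  · intro a ha; simp_all
  · intro a _ b _ h; exact σ.injective h
  · intro b hb; exact ⟨σ.symm b, by simp_all, by simp⟩

lemma card_le_eq_rnk {n : ℕ} {v : Fin (n + 1) → ℝ} (hv : Function.Injective v) :
    (univ.filter (fun i : Fin n => v i.castSucc ≤ v (Fin.last n))).card
      = rnk v (Fin.last n) := by
  classical
  unfold rnk
  apply Finset.card_bij (fun i _ => Fin.castSucc i)
  · intro a ha
    simp only [mem_filter, mem_univ, true_and] at ha ⊢
    have hne : a.castSucc ≠ Fin.last n := (Fin.castSucc_lt_last a).ne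
    exact lt_of_le_of_ne ha (fun h => hne (hv h))
  · intro a _ b _ h; exact Fin.castSucc_injective n h
  · intro j hj
    simp only [mem_filter, mem_univ, true_and] at hj
    have hne : j ≠ Fin.last n := fun h => by simp [h] at hj
    obtain ⟨i, hi⟩ := Fin.exists_castSucc_eq.mpr hne
    exact ⟨i, by simp [mem_filter, hi, hj.le], hi⟩

end Aux

theorem stmt0 {Ω : Type*} [MeasurableSpace Ω] (P : Measure Ω) [IsProbabilityMeasure P]
    (n : ℕ) (hn : 0 < n) (Z : Fin (n + 1) → Ω → ℝ) (hZ : ∀ i, Measurable (Z i))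
    (hexch : ∀ σ : Equiv.Perm (Fin (n + 1)),
      Measure.map (fun ω i => Z (σ i) ω) P = Measure.map (fun ω i => Z i ω) P)
    (hdist : ∀ᵐ ω ∂P, Function.Injective (fun i => Z i ω))
    (Fn : Ω → ℝ → ℝ)
    (hFn : ∀ ω z, Fn ω z =
      ((univ.filter (fun i : Fin n => Z i.castSucc ω ≤ z)).card : ℝ) / n) :
    ∀ k : ℕ, k ≤ n →
      P {ω | Fn ω (Z (Fin.last n) ω) = (k : ℝ) / n} = 1 / (n + 1) := by
  intro k hk
  classical
  set L := Fin.last n with hL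
  set Zv : Ω → Fin (n + 1) → ℝ := fun ω i => Z i ω with hZv
  have hZvm : Measurable Zv := measurable_pi_lambda _ hZ
  set E : Fin (n + 1) → Set Ω := fun j => {ω | rnk (Zv ω) j = k} with hE
  have hEm : ∀ j, MeasurableSet (E j) := by
    intro j
    have hm : Measurable fun ω => rnk (Zv ω) j := by
      have := measurable_card_filter (fun (i : Fin (n+1)) ω => Z i ω < Z j ω)
        (fun i => measurableSet_lt (hZ i) (hZ j))
      convert this using 2
      unfold rnk; congr
    exact hm (measurableSet_singleton k)
  -- Step A : the target set is a.e. equal to E L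
  have hAE : {ω | Fn ω (Z L ω) = (k : ℝ) / n} =ᵐ[P] E L := by
    rw [Filter.eventuallyEq_set]
    filter_upwards [hdist] with ω hω
    have hn0 : (n : ℝ) ≠ 0 := Nat.cast_ne_zero.mpr hn.ne'
    have hcard : ((univ.filter (fun i : Fin n => Z i.castSucc ω ≤ Z L ω)).card : ℕ)
        = rnk (Zv ω) L := card_le_eq_rnk hω
    simp only [Set.mem_setOf_eq, hE, hFn]
    rw [hcard]
    constructor
    · intro h
      have := (div_left_inj' hn0).mp h
      exact_mod_cast this
    · intro h; rw [h]
  -- Step B : all E j have the same measure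
  have hB : ∀ j, P (E j) = P (E L) := by
    intro j
    set σ := Equiv.swap j L with hσ
    have hfm : Measurable (fun ω (i : Fin (n+1)) => Z (σ i) ω) :=
      measurable_pi_lambda _ fun i => hZ _
    have hSm : MeasurableSet {v : Fin (n + 1) → ℝ | rnk v L = k} := by
      have hm : Measurable fun v : Fin (n + 1) → ℝ => rnk v L := by
        have := measurable_card_filter (fun (i : Fin (n+1)) (v : Fin (n+1) → ℝ) => v i < v L)
          (fun i => measurableSet_lt (measurable_pi_apply i) (measurable_pi_apply L))
        convert this using 2
        unfold rnk; congr
      exact hm (measurableSet_singleton k)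
    have h2 : (fun ω (i : Fin (n+1)) => Z (σ i) ω) ⁻¹' {v | rnk v L = k} = E j := by
      ext ω
      simp only [Set.mem_preimage, Set.mem_setOf_eq, hE]
      have : rnk (fun i => Z (σ i) ω) L = rnk (Zv ω) j := by
        unfold rnk
        have hσL : σ L = j := Equiv.swap_apply_right j L
        simp only [hσL]
        exact card_filter_comp_perm σ (fun i => Z i ω < Z j ω)
      rw [this]
    have h3 : Zv ⁻¹' {v | rnk v L = k} = E L := rfl
    calc P (E j) = P ((fun ω (i : Fin (n+1)) => Z (σ i) ω) ⁻¹' {v | rnk v L = k}) := by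
          rw [h2]
      _ = (Measure.map (fun ω (i : Fin (n+1)) => Z (σ i) ω) P) {v | rnk v L = k} :=
          (Measure.map_apply hfm hSm).symm
      _ = (Measure.map Zv P) {v | rnk v L = k} := by rw [hexch σ]
      _ = P (Zv ⁻¹' {v | rnk v L = k}) := Measure.map_apply hZvm hSm
      _ = P (E L) := by rw [h3]
  -- Step C : the sets E j a.e. partition Ω
  set D : Set Ω := {ω | Function.Injective fun i => Z i ω} with hD
  have hDmeas : MeasurableSet D := by
    have hDeq : D = ⋂ (i) (j) (_ : i ≠ j), {ω | Z i ω ≠ Z j ω} := by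
      ext ω
      simp only [hD, Set.mem_setOf_eq, Set.mem_iInter]
      constructor
      · intro h i j hij he; exact hij (h he)
      · intro h a b hab; by_contra hne; exact h a b hne hab
    rw [hDeq]
    exact MeasurableSet.iInter fun i => MeasurableSet.iInter fun j =>
      MeasurableSet.iInter fun _ => (measurableSet_eq_fun (hZ i) (hZ j)).compl
  have hDae : D =ᵐ[P] (Set.univ : Set Ω) := Filter.eventuallyEq_univ.mpr hdist
  have hPD : P D = 1 := by rw [measure_congr hDae, measure_univ]
  have hdisj : (↑(univ : Finset (Fin (n + 1))) : Set (Fin (n+1))).PairwiseDisjoint (fun j => E j ∩ D) := by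
    intro a _ b _ hab
    refine Set.disjoint_left.mpr ?_
    rintro ω ⟨ha, hωD⟩ ⟨hb, _⟩
    exact hab (rnk_inj hωD (ha.trans hb.symm))
  have hunion : (⋃ j, (E j ∩ D)) = D := by
    ext ω
    constructor
    · rintro ⟨_, ⟨j, rfl⟩, _, hωD⟩; exact hωD
    · intro hω
      obtain ⟨j, hj⟩ := rnk_surj hω k hk
      exact Set.mem_iUnion.mpr ⟨j, hj, hω⟩
  have hsum : ∑ j : Fin (n + 1), P (E j ∩ D) = 1 := by
    have := measure_biUnion_finset (μ := P)
      hdisj (fun j _ => (hEm j).inter hDmeas)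
    rw [show (⋃ j ∈ (univ : Finset (Fin (n+1))), (E j ∩ D)) = D by simpa using hunion] at this
    rw [← this, hPD]
  have hED : ∀ j, P (E j ∩ D) = P (E j) := by
    intro j
    apply measure_congr
    have := (Filter.EventuallyEq.refl (ae P) (E j)).inter hDae
    rwa [Set.inter_univ] at this
  have hmain : (n + 1 : ℝ≥0∞) * P (E L) = 1 := by
    calc (n + 1 : ℝ≥0∞) * P (E L) = ∑ _j : Fin (n + 1), P (E L) := by
          simp [Finset.sum_const, Fintype.card_fin, nsmul_eq_mul, mul_comm]
      _ = ∑ j : Fin (n + 1), P (E j ∩ D) := by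
          refine Finset.sum_congr rfl fun j _ => ?_
          rw [hED j, hB j]
      _ = 1 := hsum
  have hne0 : (n + 1 : ℝ≥0∞) ≠ 0 := by simp
  have hnetop : (n + 1 : ℝ≥0∞) ≠ ⊤ := by
    simp [ENNReal.add_ne_top]
  calc P {ω | Fn ω (Z L ω) = (k : ℝ) / n} = P (E L) := measure_congr hAE
    _ = 1 / (n + 1) := by
        rw [ENNReal.eq_div_iff hne0 hnetop]
        exact hmain
end

section
/- Let Z_1,...,Z_n, Z be exchangeable real-valued random variables with almost surely distinct values and F_n the empirical CDF of Z_1,...,Z_n. Then for 0 ≤ a ≤ b ≤ 1, P(F_n(Z) ∈ [a,b]) = (⌊nb⌋ − ⌈na⌉ + 1)/(n+1). -/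
open MeasureTheory Finset
open scoped ENNReal

lemma rank_lt {m : ℕ} (v : Fin m → ℝ) (j : Fin m) :
    (univ.filter fun i => v i < v j).card < m := by
  have h : (univ.filter fun i => v i < v j) ⊂ univ := by
    rw [Finset.ssubset_univ_iff]
    intro h
    have := (Finset.mem_filter.mp (h ▸ Finset.mem_univ j)).2
    exact lt_irrefl _ this
  simpa using Finset.card_lt_card h

lemma rank_inj {m : ℕ} {v : Fin m → ℝ} (hv : Function.Injective v) :
    Function.Injective (fun j => (univ.filter fun i => v i < v j).card) := by
  have key : ∀ j1 j2 : Fin m, v j1 < v j2 →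
      (univ.filter fun i => v i < v j1).card < (univ.filter fun i => v i < v j2).card := by
    intro j1 j2 hlt
    refine Finset.card_lt_card ?_
    constructor
    · intro i hi
      simp only [Finset.mem_filter, Finset.mem_univ, true_and] at hi ⊢
      exact hi.trans hlt
    · intro hsub
      have hj1 : j1 ∈ univ.filter fun i => v i < v j2 := by
        simp [hlt]
      have := (Finset.mem_filter.mp (hsub hj1)).2
      exact lt_irrefl _ this
  intro j1 j2 h
  by_contra hne
  rcases lt_trichotomy (v j1) (v j2) with hlt | heq | hgt
  · exact absurd h (Nat.ne_of_lt (key _ _ hlt))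
  · exact hne (hv heq)
  · exact absurd h.symm (Nat.ne_of_lt (key _ _ hgt))

lemma rank_surj {m : ℕ} {v : Fin m → ℝ} (hv : Function.Injective v) (k : ℕ) (hk : k < m) :
    ∃ j, (univ.filter fun i => v i < v j).card = k := by
  let f : Fin m → Fin m := fun j => ⟨_, rank_lt v j⟩
  have hf : Function.Injective f := by
    intro j1 j2 h
    exact rank_inj hv (congrArg Fin.val h)
  obtain ⟨j, hj⟩ := Finite.injective_iff_surjective.mp hf ⟨k, hk⟩
  exact ⟨j, congrArg Fin.val hj⟩

theorem stmt1 {Ω : Type*} [MeasurableSpace Ω] (P : Measure Ω) [IsProbabilityMeasure P]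
    (n : ℕ) (hn : 0 < n) (Z : Fin (n + 1) → Ω → ℝ) (hZ : ∀ i, Measurable (Z i))
    (hexch : ∀ σ : Equiv.Perm (Fin (n + 1)),
      Measure.map (fun ω i => Z (σ i) ω) P = Measure.map (fun ω i => Z i ω) P)
    (hdist : ∀ᵐ ω ∂P, Function.Injective (fun i => Z i ω))
    (Fn : Ω → ℝ → ℝ)
    (hFn : ∀ ω z, Fn ω z =
      ((univ.filter (fun i : Fin n => Z i.castSucc ω ≤ z)).card : ℝ) / n)
    (a b : ℝ) (ha : 0 ≤ a) (hab : a ≤ b) (hb : b ≤ 1) :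
    P {ω | Fn ω (Z (Fin.last n) ω) ∈ Set.Icc a b} =
      ENNReal.ofReal (((⌊(n : ℝ) * b⌋ - ⌈(n : ℝ) * a⌉ + 1 : ℤ) : ℝ) / (n + 1)) := by
  classical
  set J : Ω → (Fin (n + 1) → ℝ) := fun ω i => Z i ω with hJdef
  have hJ : Measurable J := measurable_pi_lambda _ (fun i => hZ i)
  set S : Fin (n + 1) → ℕ → Set (Fin (n + 1) → ℝ) :=
    fun j k => {v | (univ.filter fun i => v i < v j).card = k} with hSdef
  have hSmeas : ∀ j k, MeasurableSet (S j k) := by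
    intro j k
    have hf : Measurable (fun v : Fin (n + 1) → ℝ =>
        (univ.filter fun i => v i < v j).card) := by
      have heq : (fun v : Fin (n + 1) → ℝ => (univ.filter fun i => v i < v j).card)
          = fun v => ∑ i, if v i < v j then 1 else 0 := by
        funext v; rw [Finset.card_filter]
      rw [heq]
      exact Finset.measurable_sum _ (fun i _ =>
        Measurable.ite (measurableSet_lt (measurable_pi_apply i) (measurable_pi_apply j))
          measurable_const measurable_const)
    exact hf (measurableSet_singleton k)
  set E : Fin (n + 1) → ℕ → Set Ω := fun j k => J ⁻¹' S j k with hEdef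
  have hEmeas : ∀ j k, MeasurableSet (E j k) := fun j k => hJ (hSmeas j k)
  have hEmem : ∀ j k ω, ω ∈ E j k ↔ (univ.filter fun i => Z i ω < Z j ω).card = k := by
    intro j k ω
    simp [hEdef, hSdef, hJdef, Set.mem_preimage]
  -- exchangeability: all marginal rank events have the same probability
  have hEeq : ∀ j k, P (E j k) = P (E (Fin.last n) k) := by
    intro j k
    set σ : Equiv.Perm (Fin (n + 1)) := Equiv.swap j (Fin.last n) with hσdef
    set c : (Fin (n + 1) → ℝ) → (Fin (n + 1) → ℝ) := fun v i => v (σ i) with hcdef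
    have hc : Measurable c := measurable_pi_lambda _ (fun i => measurable_pi_apply _)
    have hpre : c ⁻¹' S (Fin.last n) k = S j k := by
      ext v
      simp only [hSdef, Set.mem_preimage, Set.mem_setOf_eq, hcdef]
      have hcard : (univ.filter fun i => v (σ i) < v (σ (Fin.last n))).card
          = (univ.filter fun i => v i < v (σ (Fin.last n))).card := by
        refine Finset.card_equiv σ ?_
        intro i
        simp
      have hσl : σ (Fin.last n) = j := Equiv.swap_apply_right _ _
      rw [hcard, hσl]
    have hcomp : (fun ω i => Z (σ i) ω) = c ∘ J := rfl
    calc P (E j k) = Measure.map J P (S j k) :=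
          (Measure.map_apply hJ (hSmeas j k)).symm
      _ = Measure.map J P (c ⁻¹' S (Fin.last n) k) := by rw [hpre]
      _ = Measure.map c (Measure.map J P) (S (Fin.last n) k) :=
          (Measure.map_apply hc (hSmeas _ _)).symm
      _ = Measure.map (fun ω i => Z (σ i) ω) P (S (Fin.last n) k) := by
          rw [hcomp, Measure.map_map hc hJ]
      _ = Measure.map J P (S (Fin.last n) k) := by rw [hexch σ]
      _ = P (E (Fin.last n) k) := Measure.map_apply hJ (hSmeas _ _)
  -- the good set of full measure
  set G : Set Ω := {ω | Function.Injective fun i => Z i ω} with hGdef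
  have hGmeas : MeasurableSet G := by
    have hG2 : G = ⋂ i, ⋂ j, {ω | Z i ω = Z j ω → i = j} := by
      ext ω; simp [hGdef, Function.Injective]
    rw [hG2]
    refine MeasurableSet.iInter fun i => MeasurableSet.iInter fun j => ?_
    by_cases h : i = j
    · simp [h]
    · have : {ω | Z i ω = Z j ω → i = j} = {ω | Z i ω = Z j ω}ᶜ := by
        ext ω; simp [h]
      rw [this]
      exact (measurableSet_eq_fun (hZ i) (hZ j)).compl
  have hGc : P Gᶜ = 0 := by
    rw [Set.compl_setOf]
    exact hdist
  -- uniformity of the rank of the last variable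
  have huniform : ∀ k, k ≤ n → P (E (Fin.last n) k) = ((n : ℝ≥0∞) + 1)⁻¹ := by
    intro k hk
    have hsum : ∑ j : Fin (n + 1), P (E j k) = 1 := by
      have h1 : ∀ j, P (E j k) = P (E j k ∩ G) := fun j =>
        (measure_inter_conull hGc).symm
      have hdisj : Set.PairwiseDisjoint (↑(univ : Finset (Fin (n + 1))))
          (fun j => E j k ∩ G) := by
        intro j1 _ j2 _ hne
        refine Set.disjoint_left.mpr ?_
        intro ω h1' h2'
        have hr1 := (hEmem j1 k ω).mp h1'.1
        have hr2 := (hEmem j2 k ω).mp h2'.1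
        exact hne (rank_inj h1'.2 (hr1.trans hr2.symm))
      have hunion : (⋃ j ∈ (univ : Finset (Fin (n + 1))), E j k ∩ G) = G := by
        apply subset_antisymm
        · intro ω hω'
          obtain ⟨j, -, hj⟩ := Set.mem_iUnion₂.mp hω'
          exact hj.2
        · intro ω hg
          have hg' : Function.Injective fun i => Z i ω := hg
          obtain ⟨j, hj⟩ := rank_surj (v := fun i => Z i ω) hg' k (Nat.lt_succ_of_le hk)
          exact Set.mem_iUnion₂.mpr ⟨j, Finset.mem_univ j, (hEmem j k ω).mpr hj, hg⟩
      have hPG : P G = 1 := by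
        have h := measure_add_measure_compl (μ := P) hGmeas
        rw [hGc, add_zero, measure_univ] at h
        exact h
      calc ∑ j : Fin (n + 1), P (E j k) = ∑ j : Fin (n + 1), P (E j k ∩ G) := by
            simp_rw [h1]
        _ = P (⋃ j ∈ (univ : Finset (Fin (n + 1))), E j k ∩ G) :=
            (measure_biUnion_finset hdisj (fun j _ => (hEmeas j k).inter hGmeas)).symm
        _ = P G := by rw [hunion]
        _ = 1 := hPG
    have hmul : ((n : ℝ≥0∞) + 1) * P (E (Fin.last n) k) = 1 := by
      calc ((n : ℝ≥0∞) + 1) * P (E (Fin.last n) k)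
          = ((n + 1 : ℕ) : ℝ≥0∞) * P (E (Fin.last n) k) := by push_cast; ring
        _ = ∑ _j : Fin (n + 1), P (E (Fin.last n) k) := by
            rw [Finset.sum_const, nsmul_eq_mul]; simp
        _ = ∑ j : Fin (n + 1), P (E j k) :=
            Finset.sum_congr rfl fun j _ => (hEeq j k).symm
        _ = 1 := hsum
    have hne0 : (n : ℝ≥0∞) + 1 ≠ 0 := by simp
    have hnetop : (n : ℝ≥0∞) + 1 ≠ ⊤ := by
      simp [ENNReal.add_ne_top]
    calc P (E (Fin.last n) k)
        = ((n : ℝ≥0∞) + 1)⁻¹ * (((n : ℝ≥0∞) + 1) * P (E (Fin.last n) k)) := by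
          rw [← mul_assoc, ENNReal.inv_mul_cancel hne0 hnetop, one_mul]
      _ = ((n : ℝ≥0∞) + 1)⁻¹ := by rw [hmul, mul_one]
  -- the index set
  set K : Finset ℕ := (Finset.range (n + 1)).filter
    (fun k => ⌈(n : ℝ) * a⌉ ≤ (k : ℤ) ∧ (k : ℤ) ≤ ⌊(n : ℝ) * b⌋) with hKdef
  -- the target event a.e. equals the union of rank events over K
  have hae : {ω | Fn ω (Z (Fin.last n) ω) ∈ Set.Icc a b}
      =ᵐ[P] ⋃ k ∈ K, E (Fin.last n) k := by
    rw [Filter.eventuallyEq_set]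
    filter_upwards [hdist] with ω hω
    set R : ℕ := (univ.filter fun i : Fin (n + 1) => Z i ω < Z (Fin.last n) ω).card with hRdef
    have hcc : (univ.filter fun i : Fin n => Z i.castSucc ω ≤ Z (Fin.last n) ω).card = R := by
      have hptw : ∀ i ∈ (univ : Finset (Fin n)),
          (Z i.castSucc ω ≤ Z (Fin.last n) ω) ↔ (Z i.castSucc ω < Z (Fin.last n) ω) := by
        intro i _
        have hne : Z i.castSucc ω ≠ Z (Fin.last n) ω := fun h =>
          absurd (hω h) (Fin.ne_of_lt (Fin.castSucc_lt_last i))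
        exact ⟨fun h => lt_of_le_of_ne h hne, le_of_lt⟩
      rw [Finset.filter_congr hptw, hRdef, Finset.card_filter, Finset.card_filter,
        Fin.sum_univ_castSucc]
      simp
    have hFnval : Fn ω (Z (Fin.last n) ω) = (R : ℝ) / n := by
      rw [hFn, hcc]
    have hRlt : R < n + 1 := rank_lt _ _
    have hiff : Fn ω (Z (Fin.last n) ω) ∈ Set.Icc a b ↔
        (⌈(n : ℝ) * a⌉ ≤ (R : ℤ) ∧ (R : ℤ) ≤ ⌊(n : ℝ) * b⌋) := by
      rw [hFnval, Set.mem_Icc]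
      have hnpos : (0 : ℝ) < n := by exact_mod_cast hn
      constructor
      · rintro ⟨h1, h2⟩
        constructor
        · rw [Int.ceil_le]
          push_cast
          calc (n : ℝ) * a = a * n := mul_comm _ _
            _ ≤ R := (le_div_iff₀ hnpos).mp h1
        · rw [Int.le_floor]
          push_cast
          calc (R : ℝ) ≤ b * n := (div_le_iff₀ hnpos).mp h2
            _ = (n : ℝ) * b := mul_comm _ _
      · rintro ⟨h1, h2⟩
        rw [Int.ceil_le] at h1
        rw [Int.le_floor] at h2
        push_cast at h1 h2
        constructor
        · rw [le_div_iff₀ hnpos, mul_comm]; exact h1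
        · rw [div_le_iff₀ hnpos, mul_comm]; exact h2
    rw [hiff]
    constructor
    · intro h
      have hRK : R ∈ K := by
        simp only [hKdef, Finset.mem_filter, Finset.mem_range]
        exact ⟨hRlt, h⟩
      exact Set.mem_iUnion₂.mpr ⟨R, hRK, (hEmem (Fin.last n) R ω).mpr rfl⟩
    · intro h
      obtain ⟨k, hk, hke⟩ := Set.mem_iUnion₂.mp h
      have hRk : R = k := (hEmem (Fin.last n) k ω).mp hke
      simp only [hKdef, Finset.mem_filter, Finset.mem_range] at hk
      rw [hRk]
      exact hk.2
  -- disjointness of rank events of the last variable over k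
  have hdisjK : Set.PairwiseDisjoint (↑K) (fun k => E (Fin.last n) k) := by
    intro k1 _ k2 _ hne
    refine Set.disjoint_left.mpr ?_
    intro ω h1 h2
    exact hne (((hEmem _ k1 ω).mp h1).symm.trans ((hEmem _ k2 ω).mp h2))
  -- compute the cardinality of K
  set A : ℤ := ⌈(n : ℝ) * a⌉ with hAdef
  set B : ℤ := ⌊(n : ℝ) * b⌋ with hBdef
  have hA0 : 0 ≤ A := Int.ceil_nonneg (mul_nonneg (Nat.cast_nonneg n) ha)
  have hB0 : 0 ≤ B := Int.floor_nonneg.mpr (mul_nonneg (Nat.cast_nonneg n) (ha.trans hab))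
  have hBn : B ≤ n := by
    rw [hBdef]
    have : (n : ℝ) * b ≤ n := by nlinarith
    calc ⌊(n : ℝ) * b⌋ ≤ ⌊(n : ℝ)⌋ := Int.floor_le_floor this
      _ = n := Int.floor_natCast n
  have hAB : A ≤ B + 1 := by
    calc A ≤ ⌈(n : ℝ) * b⌉ := Int.ceil_le_ceil (by nlinarith)
      _ ≤ B + 1 := Int.ceil_le_floor_add_one _
  have hKcard : (K.card : ℤ) = B - A + 1 := by
    have hKeq : K = Finset.Icc A.toNat B.toNat := by
      ext k
      rw [hKdef, Finset.mem_filter, Finset.mem_range, Finset.mem_Icc]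
      omega
    rw [hKeq, Nat.card_Icc]
    omega
  -- conclude
  have hmain : P {ω | Fn ω (Z (Fin.last n) ω) ∈ Set.Icc a b}
      = (K.card : ℝ≥0∞) * ((n : ℝ≥0∞) + 1)⁻¹ := by
    rw [measure_congr hae,
      measure_biUnion_finset hdisjK (fun k _ => hEmeas _ _)]
    rw [Finset.sum_congr rfl (fun k hk => huniform k (by
      rw [hKdef, Finset.mem_filter, Finset.mem_range] at hk
      omega))]
    rw [Finset.sum_const, nsmul_eq_mul]
  rw [hmain]
  have hcast : ((B - A + 1 : ℤ) : ℝ) = (K.card : ℝ) := by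
    rw [← hKcard]; push_cast; ring
  rw [hcast, ENNReal.ofReal_div_of_pos (by positivity)]
  have h1 : ENNReal.ofReal ((K.card : ℝ)) = (K.card : ℝ≥0∞) := ENNReal.ofReal_natCast _
  have h2 : ENNReal.ofReal ((n : ℝ) + 1) = (n : ℝ≥0∞) + 1 := by
    rw [show ((n : ℝ) + 1) = ((n + 1 : ℕ) : ℝ) by push_cast; ring, ENNReal.ofReal_natCast]
    push_cast
    ring
  rw [h1, h2, ENNReal.div_eq_inv_mul, mul_comm]
end

section
/- Let Z_1,...,Z_n, Z be exchangeable real-valued random variables with almost surely distinct values, F_n the empirical CDF of Z_1,...,Z_n, and 0 ≤ a ≤ b ≤ 1 with (⌊nb⌋ − ⌈na⌉ + 1)/(n+1) ≥ 1−α. Then P(Z ∈ {z : F_n(z) ∈ [a,b]}) ≥ 1−α. -/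
open MeasureTheory Finset

namespace Stmt2Aux

noncomputable def rk {n : ℕ} (j : Fin n) (v : Fin n → ℝ) : ℕ :=
  (Finset.univ.filter (fun i => v i ≤ v j)).card

lemma rk_measurable {n : ℕ} (j : Fin n) : Measurable (rk j) := by
  have h : rk j = fun v => ∑ i : Fin n, if v i ≤ v j then 1 else 0 := by
    funext v; rw [rk, Finset.card_filter]
  rw [h]
  exact Finset.measurable_sum _ (fun i _ =>
    Measurable.ite (measurableSet_le (measurable_pi_apply i) (measurable_pi_apply j))
      measurable_const measurable_const)

lemma rk_pos {n : ℕ} (j : Fin n) (v : Fin n → ℝ) : 1 ≤ rk j v := by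
  have : j ∈ Finset.univ.filter (fun i => v i ≤ v j) := by simp
  exact Finset.card_pos.mpr ⟨j, this⟩

lemma rk_le {n : ℕ} (j : Fin n) (v : Fin n → ℝ) : rk j v ≤ n := by
  simpa [rk] using Finset.card_filter_le Finset.univ (fun i => v i ≤ v j)

lemma rk_lt {n : ℕ} {j j' : Fin n} {v : Fin n → ℝ} (h : v j < v j') : rk j v < rk j' v := by
  apply Finset.card_lt_card
  constructor
  · intro i hi
    simp only [Finset.mem_filter, Finset.mem_univ, true_and] at hi ⊢
    exact le_trans hi h.le
  · intro hsub
    have : j' ∈ Finset.univ.filter (fun i => v i ≤ v j) := hsub (by simp)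
    simp at this
    exact absurd this (not_le.mpr h)

lemma rk_injective {n : ℕ} {v : Fin n → ℝ} (hv : Function.Injective v) :
    Function.Injective (fun j => rk j v) := by
  intro j j' h
  rcases lt_trichotomy (v j) (v j') with hlt | heq | hgt
  · exact absurd h (Nat.ne_of_lt (rk_lt hlt))
  · exact hv heq
  · exact absurd h.symm (Nat.ne_of_lt (rk_lt hgt))

lemma rk_surj {n : ℕ} {v : Fin n → ℝ} (hv : Function.Injective v) {k : ℕ}
    (hk : k ∈ Finset.Icc 1 n) : ∃ j, rk j v = k := by
  have himg : (Finset.univ.image (fun j => rk j v)) = Finset.Icc 1 n := by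
    apply Finset.eq_of_subset_of_card_le
    · intro x hx
      simp only [Finset.mem_image] at hx
      obtain ⟨j, _, rfl⟩ := hx
      exact Finset.mem_Icc.mpr ⟨rk_pos j v, rk_le j v⟩
    · rw [Finset.card_image_of_injective _ (rk_injective hv)]
      simp [Nat.card_Icc]
  have : k ∈ Finset.univ.image (fun j => rk j v) := himg ▸ hk
  simpa using this

lemma rk_comp {n : ℕ} (σ : Equiv.Perm (Fin n)) (v : Fin n → ℝ) (j : Fin n) :
    rk j (v ∘ σ) = rk (σ j) v := by
  unfold rk
  apply Finset.card_bij (fun i _ => σ i)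
  · intro i hi; simp at hi ⊢; exact hi
  · intro i _ i' _ h; exact σ.injective h
  · intro i hi
    refine ⟨σ.symm i, ?_, by simp⟩
    simp at hi ⊢
    simpa using hi

lemma rk_last {n : ℕ} (v : Fin (n + 1) → ℝ) :
    rk (Fin.last n) v =
      (Finset.univ.filter (fun i : Fin n => v i.castSucc ≤ v (Fin.last n))).card + 1 := by
  unfold rk
  rw [Fin.univ_castSuccEmb, Finset.filter_cons]
  simp only [le_refl, if_pos]
  rw [Finset.cons_eq_insert, Finset.card_insert_of_notMem]
  · rw [Finset.filter_map, Finset.card_map]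
    rfl
  · intro hmem
    have := Finset.mem_filter.mp hmem |>.1
    simp only [Finset.mem_map] at this
    obtain ⟨i, _, hi⟩ := this
    exact absurd hi (Fin.castSucc_lt_last i).ne

end Stmt2Aux

theorem stmt2 {Ω : Type*} [MeasurableSpace Ω] (P : Measure Ω) [IsProbabilityMeasure P]
    (n : ℕ) (hn : 0 < n) (Z : Fin (n + 1) → Ω → ℝ) (hZ : ∀ i, Measurable (Z i))
    (hexch : ∀ σ : Equiv.Perm (Fin (n + 1)),
      Measure.map (fun ω i => Z (σ i) ω) P = Measure.map (fun ω i => Z i ω) P)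
    (hdist : ∀ᵐ ω ∂P, Function.Injective (fun i => Z i ω))
    (Fn : Ω → ℝ → ℝ)
    (hFn : ∀ ω z, Fn ω z =
      ((univ.filter (fun i : Fin n => Z i.castSucc ω ≤ z)).card : ℝ) / n)
    (a b : ℝ) (ha : 0 ≤ a) (hab : a ≤ b) (hb : b ≤ 1) (α : ℝ)
    (hcal : 1 - α ≤ ((⌊(n : ℝ) * b⌋ - ⌈(n : ℝ) * a⌉ + 1 : ℤ) : ℝ) / (n + 1)) :
    ENNReal.ofReal (1 - α) ≤
      P {ω | Z (Fin.last n) ω ∈ {z : ℝ | Fn ω z ∈ Set.Icc a b}} := by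
  classical
  -- trivial case
  by_cases hle : ⌈(n : ℝ) * a⌉ ≤ ⌊(n : ℝ) * b⌋
  swap
  · have h0 : ((⌊(n : ℝ) * b⌋ - ⌈(n : ℝ) * a⌉ + 1 : ℤ) : ℝ) ≤ 0 := by
      have : ⌊(n : ℝ) * b⌋ - ⌈(n : ℝ) * a⌉ + 1 ≤ 0 := by omega
      exact_mod_cast this
    have : 1 - α ≤ 0 := le_trans hcal (div_nonpos_of_nonpos_of_nonneg h0 (by positivity))
    simp [ENNReal.ofReal_eq_zero.mpr this]
  -- setup
  set V : Ω → (Fin (n + 1) → ℝ) := fun ω i => Z i ω with hVdef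
  have hVm : Measurable V := measurable_pi_lambda _ (fun i => hZ i)
  set A : Fin (n + 1) → ℕ → Set Ω := fun j k => {ω | Stmt2Aux.rk j (V ω) = k} with hAdef
  have hAm : ∀ j k, MeasurableSet (A j k) := by
    intro j k
    exact (Stmt2Aux.rk_measurable j).comp hVm (measurableSet_singleton k)
  -- equality of measures
  have hmeq : ∀ j k, P (A j k) = P (A (Fin.last n) k) := by
    intro j k
    set σ := Equiv.swap (Fin.last n) j with hσ
    have hm1 : Measurable fun ω (i : Fin (n + 1)) => Z (σ i) ω :=
      measurable_pi_lambda _ (fun i => hZ _)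
    have hB : MeasurableSet {v : Fin (n + 1) → ℝ | Stmt2Aux.rk (Fin.last n) v = k} :=
      (Stmt2Aux.rk_measurable _) (measurableSet_singleton k)
    have h := congrArg (fun μ => μ {v : Fin (n + 1) → ℝ | Stmt2Aux.rk (Fin.last n) v = k})
      (hexch σ)
    rw [Measure.map_apply hm1 hB, Measure.map_apply hVm hB] at h
    have hpre : (fun ω (i : Fin (n + 1)) => Z (σ i) ω) ⁻¹'
        {v | Stmt2Aux.rk (Fin.last n) v = k} = A j k := by
      ext ω
      simp only [Set.mem_preimage, Set.mem_setOf_eq, hAdef]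
      have : (fun i => Z (σ i) ω) = (V ω) ∘ σ := rfl
      rw [this, Stmt2Aux.rk_comp]
      have : σ (Fin.last n) = j := Equiv.swap_apply_left _ _
      rw [this]
    have hpre2 : V ⁻¹' {v | Stmt2Aux.rk (Fin.last n) v = k} = A (Fin.last n) k := rfl
    rw [hpre, hpre2] at h
    exact h
  -- null set handling
  have hN : P {ω | ¬ Function.Injective (V ω)} = 0 := by
    rw [← MeasureTheory.ae_iff] ; exact hdist
  set T := toMeasurable P {ω | ¬ Function.Injective (V ω)} with hTdef
  have hTm : MeasurableSet T := measurableSet_toMeasurable _ _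
  have hT0 : P T = 0 := by rw [hTdef, measure_toMeasurable]; exact hN
  have hGinj : ∀ ω ∉ T, Function.Injective (V ω) := by
    intro ω hω
    by_contra h
    exact hω (subset_toMeasurable _ _ h)
  -- uniform distribution of the rank
  have huni : ∀ k ∈ Finset.Icc 1 (n + 1), P (A (Fin.last n) k) = ((n + 1 : ℕ) : ENNReal)⁻¹ := by
    intro k hk
    have hdisj : ((Finset.univ : Finset (Fin (n + 1))) : Set (Fin (n + 1))).PairwiseDisjoint
        (fun j => A j k ∩ Tᶜ) := by
      intro j _ j' _ hjj'
      refine Set.disjoint_left.mpr ?_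
      intro ω hω hω'
      have h1 : Stmt2Aux.rk j (V ω) = k := hω.1
      have h2 : Stmt2Aux.rk j' (V ω) = k := hω'.1
      exact hjj' (Stmt2Aux.rk_injective (hGinj ω hω.2) (h1.trans h2.symm))
    have hunion : (⋃ j ∈ (Finset.univ : Finset (Fin (n + 1))), (A j k ∩ Tᶜ)) = Tᶜ := by
      ext ω
      simp only [Set.mem_iUnion, Finset.mem_univ, Set.mem_inter_iff, Set.mem_compl_iff,
        exists_prop, true_and]
      constructor
      · rintro ⟨j, _, hω⟩; exact hω
      · intro hω
        obtain ⟨j, hj⟩ := Stmt2Aux.rk_surj (hGinj ω hω) hk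
        exact ⟨j, hj, hω⟩
    have hsum : ∑ j : Fin (n + 1), P (A j k ∩ Tᶜ) = P Tᶜ := by
      rw [← measure_biUnion_finset hdisj (fun j _ => (hAm j k).inter hTm.compl), hunion]
    have hPcompl : P Tᶜ = 1 := by
      rw [MeasureTheory.prob_compl_eq_one_iff hTm]; exact hT0
    have hAe : ∀ j, P (A j k ∩ Tᶜ) = P (A j k) := by
      intro j
      have := measure_inter_add_diff (μ := P) (A j k) hTm.compl
      have hd : P (A j k \ Tᶜ) = 0 :=
        measure_mono_null (fun ω hω => by simpa using hω.2) hT0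
      rw [hd, add_zero] at this
      exact this
    have hall : ∑ j : Fin (n + 1), P (A (Fin.last n) k) = 1 := by
      rw [← hPcompl, ← hsum]
      apply Finset.sum_congr rfl
      intro j _
      rw [hAe j, hmeq j k]
    rw [Finset.sum_const, Finset.card_univ, Fintype.card_fin] at hall
    have hcard : ((n + 1 : ℕ) : ENNReal) ≠ 0 := by simp
    have hcard' : ((n + 1 : ℕ) : ENNReal) ≠ ⊤ := by simp
    calc P (A (Fin.last n) k)
        = ((n + 1 : ℕ) : ENNReal)⁻¹ * ((n + 1 : ℕ) • P (A (Fin.last n) k)) := by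
          rw [nsmul_eq_mul, ← mul_assoc, ENNReal.inv_mul_cancel hcard hcard', one_mul]
      _ = ((n + 1 : ℕ) : ENNReal)⁻¹ := by rw [hall, mul_one]
  -- integer bounds
  have hceil0 : (0 : ℤ) ≤ ⌈(n : ℝ) * a⌉ := Int.ceil_nonneg (by positivity)
  have hfloorn : ⌊(n : ℝ) * b⌋ ≤ (n : ℤ) := by
    have h1 : (n : ℝ) * b ≤ (n : ℝ) := by nlinarith
    have := Int.floor_le_floor h1
    simpa using this
  set p := (⌈(n : ℝ) * a⌉).toNat with hp
  set q := (⌊(n : ℝ) * b⌋).toNat with hq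
  have hpz : (p : ℤ) = ⌈(n : ℝ) * a⌉ := Int.toNat_of_nonneg hceil0
  have hqz : (q : ℤ) = ⌊(n : ℝ) * b⌋ := Int.toNat_of_nonneg (le_trans hceil0 hle)
  have hpq : p ≤ q := by omega
  have hqn : q ≤ n := by omega
  -- the counting function
  set c : Ω → ℕ := fun ω =>
    (univ.filter (fun i : Fin n => Z i.castSucc ω ≤ Z (Fin.last n) ω)).card with hcdef
  have hrk : ∀ ω, Stmt2Aux.rk (Fin.last n) (V ω) = c ω + 1 := by
    intro ω
    rw [Stmt2Aux.rk_last]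
  -- identify the event
  have hEset : {ω | Z (Fin.last n) ω ∈ {z : ℝ | Fn ω z ∈ Set.Icc a b}} =
      ⋃ k ∈ Finset.Icc (p + 1) (q + 1), A (Fin.last n) k := by
    ext ω
    simp only [Set.mem_setOf_eq, Set.mem_Icc, Set.mem_iUnion, Finset.mem_Icc, exists_prop,
      hAdef, hrk ω]
    rw [hFn]
    have hnpos : (0 : ℝ) < (n : ℝ) := by exact_mod_cast hn
    constructor
    · rintro ⟨h1, h2⟩
      refine ⟨c ω + 1, ⟨?_, ?_⟩, rfl⟩
      · have : (n : ℝ) * a ≤ (c ω : ℝ) := by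
          rw [le_div_iff₀ hnpos] at h1; linarith
        have : ⌈(n : ℝ) * a⌉ ≤ (c ω : ℤ) := Int.ceil_le.mpr (by exact_mod_cast this)
        omega
      · have : (c ω : ℝ) ≤ (n : ℝ) * b := by
          rw [div_le_iff₀ hnpos] at h2; linarith
        have : (c ω : ℤ) ≤ ⌊(n : ℝ) * b⌋ := Int.le_floor.mpr (by exact_mod_cast this)
        omega
    · rintro ⟨k, ⟨hk1, hk2⟩, hkr⟩
      have hc1 : p ≤ c ω := by omega
      have hc2 : c ω ≤ q := by omega
      have hca : ⌈(n : ℝ) * a⌉ ≤ (c ω : ℤ) := by omega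
      have hcb : (c ω : ℤ) ≤ ⌊(n : ℝ) * b⌋ := by omega
      have h1 : (n : ℝ) * a ≤ (c ω : ℝ) := by
        have := Int.ceil_le.mp hca
        exact_mod_cast this
      have h2 : (c ω : ℝ) ≤ (n : ℝ) * b := by
        have := Int.le_floor.mp hcb
        exact_mod_cast this
      constructor
      · rw [le_div_iff₀ hnpos]; linarith
      · rw [div_le_iff₀ hnpos]; linarith
  -- compute the probability
  have hPcalc : P {ω | Z (Fin.last n) ω ∈ {z : ℝ | Fn ω z ∈ Set.Icc a b}} =
      ((q + 1 - p : ℕ) : ENNReal) * ((n + 1 : ℕ) : ENNReal)⁻¹ := by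
    rw [hEset, measure_biUnion_finset ?hd (fun k _ => hAm (Fin.last n) k)]
    case hd =>
      intro k _ k' _ hkk'
      refine Set.disjoint_left.mpr ?_
      intro ω hω hω'
      exact hkk' ((hω.symm).trans hω')
    rw [Finset.sum_congr rfl (fun k hk => huni k ?_)]
    · rw [Finset.sum_const, Nat.card_Icc, nsmul_eq_mul]
      congr 1
      norm_cast
      omega
    · simp only [Finset.mem_Icc] at hk ⊢
      omega
  rw [hPcalc]
  -- final numeric inequality
  have hcast : ((q + 1 - p : ℕ) : ℝ) = ((⌊(n : ℝ) * b⌋ - ⌈(n : ℝ) * a⌉ + 1 : ℤ) : ℝ) := by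
    have : ((q + 1 - p : ℕ) : ℤ) = ⌊(n : ℝ) * b⌋ - ⌈(n : ℝ) * a⌉ + 1 := by omega
    exact_mod_cast congrArg (fun z : ℤ => (z : ℝ)) this
  have hfin : 1 - α ≤ ((q + 1 - p : ℕ) : ℝ) / ((n + 1 : ℕ) : ℝ) := by
    rw [hcast]
    convert hcal using 2
    push_cast
    ring
  calc ENNReal.ofReal (1 - α)
      ≤ ENNReal.ofReal (((q + 1 - p : ℕ) : ℝ) / ((n + 1 : ℕ) : ℝ)) :=
        ENNReal.ofReal_le_ofReal hfin
    _ = ((q + 1 - p : ℕ) : ENNReal) * ((n + 1 : ℕ) : ENNReal)⁻¹ := by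
        rw [ENNReal.ofReal_div_of_pos (by positivity), ENNReal.ofReal_natCast,
          ENNReal.ofReal_natCast, div_eq_mul_inv]
end

section
/- Let (X_1,Y_1),...,(X_{n+1},Y_{n+1}) be exchangeable pairs, S : X × Y → R a score function with S(X_1,Y_1),...,S(X_{n+1},Y_{n+1}) almost surely distinct, and Q_n the empirical quantile function of S(X_1,Y_1),...,S(X_n,Y_n). Define R(x) = {y : S(x,y) ≤ Q_n(⌈(1−α)(n+1)⌉/n)}. Then P(Y_{n+1} ∈ R(X_{n+1})) ≥ 1−α. -/
open MeasureTheory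
open scoped Classical

open Finset in
lemma rank_count {m : ℕ} (T : Fin m → ℝ) (hT : Function.Injective T) (k : ℕ) (hk : k ≤ m) :
    (univ.filter (fun j => (univ.filter (fun i => T i ≤ T j)).card ≤ k)).card = k := by
  set r : Fin m → ℕ := fun j => (univ.filter (fun i => T i ≤ T j)).card with hr
  have hmono : ∀ a b, T a < T b → r a < r b := by
    intro a b hab
    apply Finset.card_lt_card
    constructor
    · intro i hi
      simp only [mem_filter, mem_univ, true_and] at hi ⊢
      exact hi.trans hab.le
    · intro hsub
      have := hsub (by simp : b ∈ univ.filter (fun i => T i ≤ T b))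
      simp only [mem_filter, mem_univ, true_and] at this
      exact absurd this (not_le.2 hab)
  have hrinj : Function.Injective r := by
    intro a b hab
    by_contra hne
    rcases lt_trichotomy (T a) (T b) with h | h | h
    · exact absurd hab (hmono a b h).ne
    · exact hne (hT h)
    · exact absurd hab.symm (hmono b a h).ne
  have himg : univ.image r = Finset.Icc 1 m := by
    apply Finset.eq_of_subset_of_card_le
    · intro x hx
      simp only [mem_image, mem_univ, true_and] at hx
      obtain ⟨j, rfl⟩ := hx
      simp only [Finset.mem_Icc]
      refine ⟨Nat.one_le_iff_ne_zero.2 ?_, (Finset.card_filter_le _ _).trans (by simp)⟩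
      have : 0 < r j := Finset.card_pos.2 ⟨j, by simp⟩
      omega
    · rw [Finset.card_image_of_injective _ hrinj]
      simp
  have := (Finset.filter_image (p := fun x => x ≤ k) (f := r) (s := univ)).symm
  have hcard : ((univ.filter (fun a => r a ≤ k)).image r).card
      = (univ.filter (fun a => r a ≤ k)).card :=
    Finset.card_image_of_injective _ hrinj
  rw [show (univ.filter (fun j => r j ≤ k)) = univ.filter (fun a => r a ≤ k) from rfl,
    ← hcard, this, himg]
  have : (Finset.Icc 1 m).filter (fun x => x ≤ k) = Finset.Icc 1 k := by
    ext x; simp only [mem_filter, Finset.mem_Icc]; omega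
  rw [this, Nat.card_Icc]
  omega

open Finset in
lemma quantile_iff {n : ℕ} (T : Fin (n+1) → ℝ) (hT : Function.Injective T)
    (k : ℕ) (hk1 : 1 ≤ k) :
    ((T (Fin.last n) : EReal) ≤ sInf {t : EReal |
        k ≤ (univ.filter (fun i : Fin n => (T i.castSucc : EReal) ≤ t)).card})
    ↔ (univ.filter (fun i : Fin (n+1) => T i ≤ T (Fin.last n))).card ≤ k := by
  set t0 : ℝ := T (Fin.last n) with ht0
  have stepA : ((t0 : EReal) ≤ sInf {t : EReal |
        k ≤ (univ.filter (fun i : Fin n => (T i.castSucc : EReal) ≤ t)).card})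
      ↔ (univ.filter (fun i : Fin n => T i.castSucc < t0)).card < k := by
    constructor
    · intro h
      by_contra hm
      push_neg at hm
      set F := univ.filter (fun i : Fin n => T i.castSucc < t0) with hF
      have hFne : F.Nonempty := Finset.card_pos.1 (lt_of_lt_of_le hk1 hm)
      have hIm : (F.image (fun i => T i.castSucc)).Nonempty := hFne.image _
      set t : ℝ := (F.image (fun i => T i.castSucc)).max' hIm with ht
      have htlt : t < t0 := by
        obtain ⟨i, hiF, hit⟩ := Finset.mem_image.1 ((F.image _).max'_mem hIm)
        rw [ht, ← hit]
        exact (Finset.mem_filter.1 hiF).2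
      have hmem : (t : EReal) ∈ {t : EReal |
          k ≤ (univ.filter (fun i : Fin n => (T i.castSucc : EReal) ≤ t)).card} := by
        refine le_trans hm (Finset.card_le_card ?_)
        intro i hiF
        simp only [mem_filter, mem_univ, true_and] at hiF ⊢
        have hle : T i.castSucc ≤ t := by
          rw [ht]
          exact Finset.le_max' (F.image (fun i => T i.castSucc)) (T i.castSucc)
            (Finset.mem_image_of_mem _ hiF)
        exact_mod_cast hle
      have := (sInf_le hmem).trans_lt (by exact_mod_cast htlt : (t : EReal) < (t0 : EReal))
      exact absurd h (not_le.2 this)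
    · intro hm
      apply le_sInf
      intro t htmem
      by_contra hlt
      push_neg at hlt
      have hsub : (univ.filter (fun i : Fin n => (T i.castSucc : EReal) ≤ t))
          ⊆ univ.filter (fun i : Fin n => T i.castSucc < t0) := by
        intro i hi
        simp only [mem_filter, mem_univ, true_and] at hi ⊢
        exact_mod_cast hi.trans_lt hlt
      exact absurd (le_trans htmem (Finset.card_le_card hsub)) (not_le.2 hm)
  have stepB : (univ.filter (fun i : Fin n => T i.castSucc < t0))
      = univ.filter (fun i : Fin n => T i.castSucc ≤ t0) := by
    ext i
    simp only [mem_filter, mem_univ, true_and]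
    constructor
    · exact le_of_lt
    · intro h
      refine lt_of_le_of_ne h (fun he => ?_)
      exact absurd (hT he) (Fin.ne_last_of_lt (Fin.castSucc_lt_last i))
  have stepC : (univ.filter (fun i : Fin (n+1) => T i ≤ t0)).card
      = (univ.filter (fun i : Fin n => T i.castSucc ≤ t0)).card + 1 := by
    rw [Finset.card_filter, Finset.card_filter, Fin.sum_univ_castSucc]
    simp [ht0]
  rw [stepA, stepB]
  omega

open Finset in
lemma perm_filter_card {m : ℕ} {β : Type*} (q : β → Prop) (z : Fin m → β)
    (σ : Equiv.Perm (Fin m)) :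
    (univ.filter (fun i => q (z (σ i)))).card = (univ.filter (fun i => q (z i))).card := by
  apply Finset.card_bij (fun a _ => σ a)
  · intro a ha
    simp only [mem_filter, mem_univ, true_and] at ha ⊢
    exact ha
  · intro a _ b _ hab
    exact σ.injective hab
  · intro b hb
    refine ⟨σ.symm b, ?_, by simp⟩
    simp only [mem_filter, mem_univ, true_and] at hb ⊢
    simpa using hb

theorem stmt15 {Ω 𝒳 𝒴 : Type*} [MeasurableSpace Ω] [MeasurableSpace 𝒳] [MeasurableSpace 𝒴]
    (P : Measure Ω) [IsProbabilityMeasure P] (n : ℕ) (hn : 0 < n)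
    (X : Fin (n + 1) → Ω → 𝒳) (Y : Fin (n + 1) → Ω → 𝒴)
    (hX : ∀ i, Measurable (X i)) (hY : ∀ i, Measurable (Y i))
    (hexch : ∀ σ : Equiv.Perm (Fin (n + 1)),
      Measure.map (fun ω i => (X (σ i) ω, Y (σ i) ω)) P =
        Measure.map (fun ω i => (X i ω, Y i ω)) P)
    (S : 𝒳 × 𝒴 → ℝ) (hS : Measurable S)
    (hdist : ∀ᵐ ω ∂P, Function.Injective (fun i : Fin (n + 1) => S (X i ω, Y i ω)))
    (α : ℝ) (hα : α ∈ Set.Ioo (0 : ℝ) 1)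
    -- `Q ω` is the `⌈(1-α)(n+1)⌉`-th smallest calibration score (`⊤` if that index
    -- exceeds `n`)
    (Q : Ω → EReal)
    (hQ : ∀ ω, Q ω = sInf {t : EReal |
      (⌈(1 - α) * (n + 1 : ℝ)⌉).toNat ≤ (Finset.univ.filter
        (fun i : Fin n => (S (X i.castSucc ω, Y i.castSucc ω) : EReal) ≤ t)).card}) :
    ENNReal.ofReal (1 - α) ≤
      P {ω | (S (X (Fin.last n) ω, Y (Fin.last n) ω) : EReal) ≤ Q ω} := by
  classical
  set c : ℤ := ⌈(1 - α) * (n + 1 : ℝ)⌉ with hc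
  set k : ℕ := c.toNat with hk
  have hα0 : 0 < 1 - α := by linarith [hα.2]
  have hx0 : 0 < (1 - α) * (n + 1 : ℝ) := by positivity
  have hcpos : 0 < c := Int.ceil_pos.2 hx0
  have hk1 : 1 ≤ k := by omega
  have hcn : c ≤ (n + 1 : ℤ) := by
    apply Int.ceil_le.2
    push_cast
    nlinarith [hα.1]
  have hkn : k ≤ n + 1 := by omega
  have hkx : (1 - α) * (n + 1 : ℝ) ≤ (k : ℝ) := by
    have h1 := Int.le_ceil ((1 - α) * (n + 1 : ℝ))
    have h2 : ((k : ℤ) : ℝ) = (c : ℝ) := by rw [hk, Int.toNat_of_nonneg hcpos.le]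
    push_cast at h2
    linarith
  -- setup
  set Z : Ω → (Fin (n + 1) → 𝒳 × 𝒴) := fun ω i => (X i ω, Y i ω) with hZ
  have hZm : Measurable Z :=
    measurable_pi_lambda _ (fun i => (hX i).prodMk (hY i))
  set r : Fin (n + 1) → (Fin (n + 1) → 𝒳 × 𝒴) → ℕ := fun j z =>
    (Finset.univ.filter (fun i => S (z i) ≤ S (z j))).card with hrdef
  have hrm : ∀ j, Measurable (r j) := by
    intro j
    have : (r j) = fun z => ∑ i : Fin (n + 1), if S (z i) ≤ S (z j) then 1 else 0 := by
      funext z; exact_mod_cast Finset.card_filter (fun i => S (z i) ≤ S (z j)) Finset.univ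
    rw [this]
    apply Finset.measurable_sum
    intro i _
    exact Measurable.ite
      (measurableSet_le (hS.comp (measurable_pi_apply i)) (hS.comp (measurable_pi_apply j)))
      measurable_const measurable_const
  set B : Fin (n + 1) → Set (Fin (n + 1) → 𝒳 × 𝒴) := fun j => {z | r j z ≤ k} with hB
  have hBm : ∀ j, MeasurableSet (B j) := fun j => hrm j (Set.finite_Iic k).measurableSet
  set A : Fin (n + 1) → Set Ω := fun j => Z ⁻¹' (B j) with hA
  have hAm : ∀ j, MeasurableSet (A j) := fun j => hZm (hBm j)
  -- exchangeability: all A j have the same measure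
  have hAeq : ∀ j, P (A j) = P (A (Fin.last n)) := by
    intro j
    set σ : Equiv.Perm (Fin (n + 1)) := Equiv.swap j (Fin.last n) with hσ
    have hZσm : Measurable (fun ω i => (X (σ i) ω, Y (σ i) ω)) :=
      measurable_pi_lambda _ (fun i => (hX (σ i)).prodMk (hY (σ i)))
    have h1 : P (A j) = Measure.map Z P (B j) := by
      rw [Measure.map_apply hZm (hBm j)]
    have h2 : Measure.map Z P (B j)
        = Measure.map (fun ω i => (X (σ i) ω, Y (σ i) ω)) P (B j) := by
      rw [hexch σ]
    have h3 : Measure.map (fun ω i => (X (σ i) ω, Y (σ i) ω)) P (B j)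
        = P ((fun ω i => (X (σ i) ω, Y (σ i) ω)) ⁻¹' (B j)) := by
      rw [Measure.map_apply hZσm (hBm j)]
    have h4 : (fun ω i => (X (σ i) ω, Y (σ i) ω)) ⁻¹' (B j) = A (Fin.last n) := by
      ext ω
      have hσj : σ j = Fin.last n := Equiv.swap_apply_left j (Fin.last n)
      have hperm := perm_filter_card (fun p => S p ≤ S (Z ω (σ j))) (Z ω) σ
      show (Finset.univ.filter (fun i => S (Z ω (σ i)) ≤ S (Z ω (σ j)))).card ≤ k
          ↔ (Finset.univ.filter (fun i => S (Z ω i) ≤ S (Z ω (Fin.last n)))).card ≤ k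
      rw [hperm, hσj]
    rw [h1, h2, h3, h4]
  -- the sum of the indicator functions is a.e. equal to k
  have hsum : ∑ j : Fin (n + 1), P (A j) = (k : ENNReal) := by
    have h1 : ∀ j, P (A j) = ∫⁻ ω, (A j).indicator 1 ω ∂P := by
      intro j
      rw [lintegral_indicator_one (hAm j)]
    rw [Finset.sum_congr rfl (fun j _ => h1 j)]
    rw [← lintegral_finset_sum _ (fun j _ => (measurable_one.indicator (hAm j)))]
    have h2 : ∀ᵐ ω ∂P, ∑ j : Fin (n + 1), (A j).indicator 1 ω
        = (k : ENNReal) := by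
      filter_upwards [hdist] with ω hω
      have hcards : (Finset.univ.filter (fun j : Fin (n+1) => ω ∈ A j)).card = k := by
        have heq : (Finset.univ.filter (fun j : Fin (n+1) => ω ∈ A j))
            = Finset.univ.filter (fun j : Fin (n+1) =>
              (Finset.univ.filter (fun i => S (Z ω i) ≤ S (Z ω j))).card ≤ k) :=
          Finset.filter_congr (fun j _ => Iff.rfl)
        rw [heq]
        exact rank_count (fun i => S (Z ω i)) hω k hkn
      calc ∑ j : Fin (n + 1), (A j).indicator 1 ω
          = ∑ j : Fin (n + 1), if ω ∈ A j then (1 : ENNReal) else 0 := by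
            apply Finset.sum_congr rfl
            intro j _
            simp [Set.indicator_apply]
        _ = ((Finset.univ.filter (fun j : Fin (n+1) => ω ∈ A j)).card : ENNReal) := by
            rw [Finset.card_filter, Nat.cast_sum]
            apply Finset.sum_congr rfl
            intro j _
            split <;> simp
        _ = (k : ENNReal) := by rw [hcards]
    rw [lintegral_congr_ae h2, lintegral_const, measure_univ, mul_one]
  have hsum2 : ∑ j : Fin (n + 1), P (A j) = (n + 1 : ENNReal) * P (A (Fin.last n)) := by
    rw [Finset.sum_congr rfl (fun j _ => hAeq j), Finset.sum_const, Finset.card_univ,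
      Fintype.card_fin, nsmul_eq_mul]
    push_cast
    ring
  -- identify the target set with A (last n) up to a.e.
  have hgoal : P {ω | (S (X (Fin.last n) ω, Y (Fin.last n) ω) : EReal) ≤ Q ω}
      = P (A (Fin.last n)) := by
    apply measure_congr
    rw [Filter.eventuallyEq_set]
    filter_upwards [hdist] with ω hω
    have h := quantile_iff (fun i => S (Z ω i)) hω k hk1
    show ((S (X (Fin.last n) ω, Y (Fin.last n) ω) : EReal) ≤ Q ω) ↔ ω ∈ A (Fin.last n)
    rw [hQ ω]
    exact h
  rw [hgoal]
  -- final arithmetic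
  have hfin : (n + 1 : ENNReal) * P (A (Fin.last n)) = (k : ENNReal) := by
    rw [← hsum2, hsum]
  have hmul : (n + 1 : ENNReal) * ENNReal.ofReal (1 - α)
      ≤ (n + 1 : ENNReal) * P (A (Fin.last n)) := by
    rw [hfin]
    have hcast : (n + 1 : ENNReal) = ENNReal.ofReal ((n : ℝ) + 1) := by
      rw [ENNReal.ofReal_add (by positivity) zero_le_one, ENNReal.ofReal_natCast,
        ENNReal.ofReal_one]
    calc (n + 1 : ENNReal) * ENNReal.ofReal (1 - α)
        = ENNReal.ofReal (((n : ℝ) + 1) * (1 - α)) := by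
          rw [ENNReal.ofReal_mul (by positivity), hcast]
        _ ≤ ENNReal.ofReal (k : ℝ) := ENNReal.ofReal_le_ofReal (by linarith)
        _ = (k : ENNReal) := ENNReal.ofReal_natCast k
  have hne0 : (n + 1 : ENNReal) ≠ 0 := by
    intro h
    rw [add_eq_zero] at h
    exact one_ne_zero h.2
  have hnetop : (n + 1 : ENNReal) ≠ ⊤ :=
    ENNReal.add_ne_top.2 ⟨ENNReal.natCast_ne_top n, ENNReal.one_ne_top⟩
  exact (ENNReal.mul_le_mul_iff_right hne0 hnetop).1 hmul
end

section
/- Let Z_1,...,Z_{n+1} be exchangeable real-valued random variables, almost surely distinct, and let R ⊆ R be a set constructed symmetrically from the multiset {Z_1,...,Z_{n+1}} containing at most ⌈(1−α)(n+1)⌉ of the points Z_i and satisfying the empirical coverage of exactly the ⌈(1−α)(n+1)⌉ smallest order statistics. Then P(Z_{n+1} ∈ R) = ⌈(1−α)(n+1)⌉/(n+1), which lies in [1−α, 1−α + 1/(n+1)]. -/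
open MeasureTheory ENNReal
open scoped Classical

namespace Stmt17Aux

variable {n : ℕ}

/-- number of coordinates ≤ t -/
noncomputable def cnt (x : Fin (n+1) → ℝ) (t : ℝ) : ℕ :=
  (Finset.univ.filter (fun i : Fin (n+1) => x i ≤ t)).card

lemma cnt_mono {x : Fin (n+1) → ℝ} {s t : ℝ} (h : s ≤ t) : cnt x s ≤ cnt x t := by
  apply Finset.card_le_card
  intro i hi
  rw [Finset.mem_filter] at hi ⊢
  exact ⟨hi.1, hi.2.trans h⟩

lemma measurable_cnt (j : Fin (n+1)) :
    Measurable (fun x : Fin (n+1) → ℝ => cnt x (x j)) := by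
  have h : (fun x : Fin (n+1) → ℝ => cnt x (x j))
      = fun x => ∑ i : Fin (n+1), if x i ≤ x j then 1 else 0 := by
    funext x
    unfold cnt
    rw [Finset.card_filter]
  rw [h]
  apply Finset.measurable_sum
  intro i _
  exact Measurable.ite (measurableSet_le (measurable_pi_apply i) (measurable_pi_apply j))
    measurable_const measurable_const

lemma cnt_comp (x : Fin (n+1) → ℝ) (σ : Equiv.Perm (Fin (n+1))) (c : ℝ) :
    cnt (fun i => x (σ i)) c = cnt x c := by
  unfold cnt
  exact Finset.card_bij (fun i _ => σ i)
    (fun i hi => by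
      rw [Finset.mem_filter] at hi ⊢; exact ⟨Finset.mem_univ _, hi.2⟩)
    (fun a _ b _ h => σ.injective h)
    (fun b hb => ⟨σ.symm b, by
      rw [Finset.mem_filter] at hb ⊢; simpa using hb.2, by simp⟩)

lemma cnt_strict {x : Fin (n+1) → ℝ} {i j : Fin (n+1)} (h : x i < x j) :
    cnt x (x i) < cnt x (x j) := by
  apply Finset.card_lt_card
  constructor
  · intro a ha
    rw [Finset.mem_filter] at ha ⊢
    exact ⟨ha.1, ha.2.trans h.le⟩
  · intro hsub
    have := hsub (Finset.mem_filter.mpr ⟨Finset.mem_univ j, le_refl _⟩)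
    rw [Finset.mem_filter] at this
    exact absurd this.2 (not_le.mpr h)

lemma g_injective {x : Fin (n+1) → ℝ} (hx : Function.Injective x) :
    Function.Injective (fun j => cnt x (x j)) := by
  intro i j h
  by_contra hij
  rcases lt_trichotomy (x i) (x j) with hlt | heq | hgt
  · exact absurd h (cnt_strict hlt).ne
  · exact hij (hx heq)
  · exact absurd h.symm (cnt_strict hgt).ne

lemma g_mem {x : Fin (n+1) → ℝ} (j : Fin (n+1)) : cnt x (x j) ∈ Finset.Icc 1 (n+1) := by
  simp only [Finset.mem_Icc]
  constructor
  · exact Finset.card_pos.mpr ⟨j, Finset.mem_filter.mpr ⟨Finset.mem_univ j, le_refl _⟩⟩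
  · simpa [cnt] using (Finset.card_filter_le (Finset.univ : Finset (Fin (n+1))) (fun i => x i ≤ x j))

lemma rank_count {x : Fin (n+1) → ℝ} (hx : Function.Injective x) {k : ℕ} (hk : k ≤ n+1) :
    (Finset.univ.filter (fun j : Fin (n+1) => cnt x (x j) ≤ k)).card = k := by
  have hinj := g_injective hx
  have himg : Finset.univ.image (fun j => cnt x (x j)) = Finset.Icc 1 (n+1) := by
    apply Finset.eq_of_subset_of_card_le
    · intro m hm
      rcases Finset.mem_image.mp hm with ⟨j, _, rfl⟩
      exact g_mem j
    · rw [Finset.card_image_of_injective _ hinj]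
      simp [Nat.card_Icc]
  have h1 : ((Finset.univ.image (fun j => cnt x (x j))).filter (fun m => m ≤ k))
      = (Finset.univ.filter (fun j : Fin (n+1) => cnt x (x j) ≤ k)).image
          (fun j => cnt x (x j)) := Finset.filter_image
  have h2 : (Finset.Icc 1 (n+1)).filter (fun m => m ≤ k) = Finset.Icc 1 k := by
    ext m; simp only [Finset.mem_filter, Finset.mem_Icc]; omega
  have := congrArg Finset.card h1
  rw [Finset.card_image_of_injective _ hinj, himg, h2, Nat.card_Icc] at this
  omega


lemma sInf_iff {x : Fin (n+1) → ℝ} (hx : Function.Injective x) {k : ℕ}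
    (hk1 : 1 ≤ k) (hk2 : k ≤ n+1) :
    x (Fin.last n) ≤ sInf {t : ℝ | k ≤ cnt x t} ↔ cnt x (x (Fin.last n)) ≤ k := by
  set S : Set ℝ := {t : ℝ | k ≤ cnt x t} with hS
  have hne : S.Nonempty := by
    refine ⟨(Finset.univ.image x).max' (by simp), ?_⟩
    have hall : ∀ i, x i ≤ (Finset.univ.image x).max' (by simp) := fun i =>
      Finset.le_max' _ _ (Finset.mem_image_of_mem x (Finset.mem_univ i))
    have : cnt x ((Finset.univ.image x).max' (by simp)) = n+1 := by
      unfold cnt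
      rw [Finset.filter_true_of_mem (fun i _ => hall i)]
      simp
    simp only [hS, Set.mem_setOf_eq, this]
    exact hk2
  have hbdd : BddBelow S := by
    refine ⟨(Finset.univ.image x).min' (by simp), fun t ht => ?_⟩
    simp only [hS, Set.mem_setOf_eq] at ht
    have hpos : 0 < cnt x t := lt_of_lt_of_le hk1 ht
    rcases Finset.card_pos.mp hpos with ⟨i, hi⟩
    rw [Finset.mem_filter] at hi
    exact le_trans (Finset.min'_le _ _ (Finset.mem_image_of_mem x (Finset.mem_univ i))) hi.2
  constructor
  · intro h
    by_contra hlt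
    push_neg at hlt
    -- take second largest among those ≤ x last
    set s := (Finset.univ.filter (fun i => x i ≤ x (Fin.last n))).erase (Fin.last n) with hs
    have hcard : k ≤ s.card := by
      have hmem : Fin.last n ∈ Finset.univ.filter (fun i => x i ≤ x (Fin.last n)) :=
        Finset.mem_filter.mpr ⟨Finset.mem_univ _, le_refl _⟩
      have h1 : (Finset.univ.filter (fun i => x i ≤ x (Fin.last n))).card = cnt x (x (Fin.last n)) := rfl
      have h2 := Finset.card_erase_of_mem hmem
      rw [← hs] at h2
      omega
    have hsne : s.Nonempty := Finset.card_pos.mp (lt_of_lt_of_le hk1 hcard)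
    set t := (s.image x).max' (hsne.image x) with ht
    have hts : ∀ i ∈ s, x i ≤ t := fun i hi =>
      Finset.le_max' _ _ (Finset.mem_image_of_mem x hi)
    have htiS : t ∈ S := by
      simp only [hS, Set.mem_setOf_eq]
      refine le_trans hcard (Finset.card_le_card ?_)
      intro i hi
      exact Finset.mem_filter.mpr ⟨Finset.mem_univ _, hts i hi⟩
    have htlt : t < x (Fin.last n) := by
      rcases Finset.mem_image.mp ((s.image x).max'_mem (hsne.image x)) with ⟨i, hi, hxi⟩
      rw [hs, Finset.mem_erase, Finset.mem_filter] at hi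
      rcases lt_or_eq_of_le hi.2.2 with h' | h'
      · rw [ht]; rw [← hxi]; exact h'
      · exact absurd (hx h') hi.1
    exact absurd (le_trans h (csInf_le hbdd htiS)) (not_le.mpr htlt)
  · intro h
    apply le_csInf hne
    intro t ht
    by_contra hlt
    push_neg at hlt
    simp only [hS, Set.mem_setOf_eq] at ht
    have hssub : (Finset.univ.filter (fun i => x i ≤ t))
        ⊂ (Finset.univ.filter (fun i => x i ≤ x (Fin.last n))) := by
      constructor
      · intro i hi
        rw [Finset.mem_filter] at hi ⊢
        exact ⟨hi.1, hi.2.trans hlt.le⟩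
      · intro hsub
        have := hsub (Finset.mem_filter.mpr ⟨Finset.mem_univ _, le_refl _⟩)
        rw [Finset.mem_filter] at this
        exact absurd this.2 (not_le.mpr hlt)
    have := Finset.card_lt_card hssub
    unfold cnt at h ht
    omega

end Stmt17Aux

open Stmt17Aux in
theorem stmt17 {Ω : Type*} [MeasurableSpace Ω] (P : Measure Ω) [IsProbabilityMeasure P]
    (n : ℕ) (Z : Fin (n + 1) → Ω → ℝ) (hZ : ∀ i, Measurable (Z i))
    (hexch : ∀ σ : Equiv.Perm (Fin (n + 1)),
      Measure.map (fun ω i => Z (σ i) ω) P = Measure.map (fun ω i => Z i ω) P)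
    (hdist : ∀ᵐ ω ∂P, Function.Injective (fun i => Z i ω))
    (α : ℝ) (hα : α ∈ Set.Ioo (0 : ℝ) 1)
    (k : ℕ) (hk : k = (⌈(1 - α) * (n + 1 : ℝ)⌉).toNat)
    -- `Q ω` is the `k`-th order statistic `Z_{(k)}` of `Z_1 ω, ..., Z_{n+1} ω`
    (Q : Ω → ℝ)
    (hQ : ∀ ω, Q ω = sInf {t : ℝ |
      k ≤ (Finset.univ.filter (fun i : Fin (n + 1) => Z i ω ≤ t)).card}) :
    P {ω | Z (Fin.last n) ω ∈ Set.Iic (Q ω)} = (k : ℝ≥0∞) / (n + 1) ∧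
    (k : ℝ) / (n + 1) ∈ Set.Icc (1 - α) (1 - α + 1 / (n + 1)) := by
  obtain ⟨hα0, hα1⟩ := hα
  have hnpos : (0:ℝ) < (n:ℝ) + 1 := by positivity
  have hcpos : (0:ℝ) < (1 - α) * ((n:ℝ) + 1) := by nlinarith
  have hceil_pos : (1:ℤ) ≤ ⌈(1 - α) * ((n:ℝ) + 1)⌉ := Int.ceil_pos.mpr hcpos
  have hkZ : (k:ℤ) = ⌈(1 - α) * ((n:ℝ) + 1)⌉ := by
    rw [hk]; exact Int.toNat_of_nonneg (by omega)
  have hkR : (k:ℝ) = (⌈(1 - α) * ((n:ℝ) + 1)⌉ : ℝ) := by exact_mod_cast congrArg (Int.cast : ℤ → ℝ) hkZ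
  have hk1 : 1 ≤ k := by omega
  have hk2 : k ≤ n + 1 := by
    have : ⌈(1 - α) * ((n:ℝ) + 1)⌉ ≤ (n:ℤ) + 1 := by
      apply Int.ceil_le.mpr
      push_cast
      nlinarith
    omega
  have hle : (1 - α) * ((n:ℝ) + 1) ≤ k := hkR ▸ Int.le_ceil _
  have hlt : (k:ℝ) < (1 - α) * ((n:ℝ) + 1) + 1 := hkR ▸ Int.ceil_lt_add_one _
  have harith : (k : ℝ) / (n + 1) ∈ Set.Icc (1 - α) (1 - α + 1 / (n + 1)) := by
    constructor
    · rw [le_div_iff₀ hnpos]; linarith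
    · rw [div_le_iff₀ hnpos]
      have : (1 - α + 1 / ((n:ℝ) + 1)) * ((n:ℝ) + 1) = (1 - α) * ((n:ℝ) + 1) + 1 := by
        field_simp
      rw [this]; linarith
  refine ⟨?_, harith⟩
  -- measure-theoretic part
  set V : Ω → (Fin (n+1) → ℝ) := fun ω i => Z i ω with hV
  have hVm : Measurable V := measurable_pi_lambda _ hZ
  set μ := Measure.map V P with hμ
  set A : Fin (n+1) → Set (Fin (n+1) → ℝ) := fun j => {x | cnt x (x j) ≤ k} with hA
  have hAm : ∀ j, MeasurableSet (A j) := fun j =>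
    (measurable_cnt j) (measurableSet_Iic : MeasurableSet (Set.Iic k))
  have hImeas : MeasurableSet {x : Fin (n+1) → ℝ | Function.Injective x} := by
    have hset : {x : Fin (n+1) → ℝ | Function.Injective x}
        = ⋂ (i) (j) (_ : i ≠ j), {x : Fin (n+1) → ℝ | x i = x j}ᶜ := by
      ext x
      simp only [Set.mem_setOf_eq, Set.mem_iInter, Set.mem_compl_iff]
      constructor
      · exact fun hx i j hij h => hij (hx h)
      · intro hx i j h
        by_contra hij
        exact hx i j hij h
    rw [hset]
    exact MeasurableSet.iInter fun i => MeasurableSet.iInter fun j =>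
      MeasurableSet.iInter fun _ =>
        (measurableSet_eq_fun (measurable_pi_apply i) (measurable_pi_apply j)).compl
  have hμinj : ∀ᵐ x ∂μ, Function.Injective x := by
    rw [hμ, ae_map_iff hVm.aemeasurable hImeas]
    exact hdist
  have hcσ : ∀ σ : Equiv.Perm (Fin (n+1)),
      Measurable (fun x : Fin (n+1) → ℝ => fun i => x (σ i)) := fun σ =>
    measurable_pi_lambda _ (fun i => measurable_pi_apply (σ i))
  have hmap : ∀ σ : Equiv.Perm (Fin (n+1)),
      μ.map (fun x => fun i => x (σ i)) = μ := by
    intro σ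
    rw [hμ, Measure.map_map (hcσ σ) hVm]
    have hcomp : (fun x : Fin (n+1) → ℝ => fun i => x (σ i)) ∘ V
        = fun ω i => Z (σ i) ω := rfl
    rw [hcomp, hexch σ]
  have hAeq : ∀ j, μ (A j) = μ (A (Fin.last n)) := by
    intro j
    set σ := Equiv.swap j (Fin.last n) with hσ
    have hpre : (fun x : Fin (n+1) → ℝ => fun i => x (σ i)) ⁻¹' (A j) = A (Fin.last n) := by
      ext x
      simp only [hA, Set.mem_preimage, Set.mem_setOf_eq]
      rw [cnt_comp x σ ((fun i => x (σ i)) j)]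
      rw [show (fun i => x (σ i)) j = x (Fin.last n) by
        simp [hσ, Equiv.swap_apply_left]]
    conv_lhs => rw [← hmap σ]
    rw [Measure.map_apply (hcσ σ) (hAm j), hpre]
  have hPM : IsProbabilityMeasure μ := Measure.isProbabilityMeasure_map hVm.aemeasurable
  have hsum : ∑ j : Fin (n+1), μ (A j) = (k : ℝ≥0∞) := by
    calc ∑ j : Fin (n+1), μ (A j)
        = ∑ j : Fin (n+1), ∫⁻ x, (A j).indicator 1 x ∂μ := by
          refine Finset.sum_congr rfl fun j _ => ?_
          rw [lintegral_indicator_one (hAm j)]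
      _ = ∫⁻ x, ∑ j : Fin (n+1), (A j).indicator 1 x ∂μ :=
          (lintegral_finset_sum _ (fun j _ => measurable_const.indicator (hAm j))).symm
      _ = ∫⁻ _, (k : ℝ≥0∞) ∂μ := by
          refine lintegral_congr_ae ?_
          filter_upwards [hμinj] with x hx
          have hcard : ∑ j : Fin (n+1), (A j).indicator (1 : (Fin (n+1) → ℝ) → ℝ≥0∞) x
              = ((Finset.univ.filter (fun j : Fin (n+1) => cnt x (x j) ≤ k)).card : ℝ≥0∞) := by
            rw [Finset.card_filter]
            push_cast
            refine Finset.sum_congr rfl fun j _ => ?_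
            by_cases h : cnt x (x j) ≤ k <;> simp [Set.indicator, hA, h]
          rw [hcard, rank_count hx hk2]
      _ = (k : ℝ≥0∞) := by rw [lintegral_const, measure_univ, mul_one]
  have hconst : ∑ j : Fin (n+1), μ (A j) = ((n:ℝ≥0∞) + 1) * μ (A (Fin.last n)) := by
    rw [Finset.sum_congr rfl (fun j _ => hAeq j)]
    simp [Finset.sum_const, mul_comm, add_mul, one_mul]
  have hAlast : μ (A (Fin.last n)) = (k : ℝ≥0∞) / ((n:ℝ≥0∞) + 1) := by
    rw [ENNReal.eq_div_iff (by simp) (by simp)]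
    rw [← hconst, hsum]
  have hae : {ω | Z (Fin.last n) ω ∈ Set.Iic (Q ω)} =ᵐ[P] V ⁻¹' (A (Fin.last n)) := by
    apply Filter.eventuallyEq_set.mpr
    filter_upwards [hdist] with ω hω
    simp only [Set.mem_setOf_eq, Set.mem_preimage, Set.mem_Iic, hA]
    rw [hQ ω]
    exact sInf_iff (x := V ω) hω hk1 hk2
  rw [measure_congr hae, show P (V ⁻¹' A (Fin.last n)) = μ (A (Fin.last n)) from
    (Measure.map_apply hVm (hAm _)).symm, hAlast]
end
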